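/- Let κ be an ordinal, C a category, and F : κ+1 ⥤ C a sequential functor. If a morphism f : X ⟶ Y of C has the right lifting property with respect to the morphism F(k ⟶ k+1) for every k < κ, then f has the right lifting property with respect to F(0 ⟶ k) for every k ≤ κ. -/

import Mathlib

/-!
STATEMENT 2: Let `κ` be an ordinal, `C` a category and `F : κ+1 ⥤ C` a sequential functor
(the ordinal `κ+1` is realised as the preorder category of ordinals `≤ κ`; sequential means
that at every limit ordinal `α ≤ κ` the cocone of the maps `F(β ⟶ α)`, `β < α`, is colimiting).
If a morphism `f` has the right lifting property with respect to `F(k ⟶ k+1)` for every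
`k < κ`, then it has the right lifting property with respect to `F(0 ⟶ k)` for every `k ≤ κ`.
-/

universe v u' u

open CategoryTheory CategoryTheory.Limits

/-- The inclusion of the ordinals `< α` into the ordinals `≤ κ`, as a functor of
preorder categories. -/
def iicIncl {κ α : Ordinal.{u}} (hα : α ≤ κ) : ↥(Set.Iio α) ⥤ ↥(Set.Iic κ) :=
  Monotone.functor
    (f := fun β => (⟨β.1, Set.mem_Iic.mpr ((Set.mem_Iio.mp β.2).le.trans hα)⟩ : ↥(Set.Iic κ)))
    (fun _ _ h => h)

/-- The cocone on the restriction of `F : κ+1 ⥤ C` to the ordinals `< α`, whose point is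
`F α` and whose legs are the maps `F (β ⟶ α)`. -/
def iicCocone {C : Type u'} [Category.{v} C] {κ : Ordinal.{u}} (F : ↥(Set.Iic κ) ⥤ C)
    {α : Ordinal.{u}} (hα : α ≤ κ) : Cocone (iicIncl hα ⋙ F) where
  pt := F.obj ⟨α, Set.mem_Iic.mpr hα⟩
  ι :=
    { app := fun β =>
        F.map (homOfLE (Subtype.mk_le_mk.mpr (Set.mem_Iio.mp β.2).le))
      naturality := fun β γ g => by
        dsimp
        rw [Category.comp_id, ← F.map_comp]
        congr 1 }

/-- A functor `F : κ+1 ⥤ C` is sequential if for every limit ordinal `α ≤ κ` the cocone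
formed by the morphisms `F (β ⟶ α)`, `β < α`, exhibits `F α` as the colimit of the
restriction of `F` to the ordinals `< α`. -/
def IsSequential {C : Type u'} [Category.{v} C] {κ : Ordinal.{u}}
    (F : ↥(Set.Iic κ) ⥤ C) : Prop :=
  ∀ (α : Ordinal.{u}) (hα : α ≤ κ), Order.IsSuccLimit α → Nonempty (IsColimit (iicCocone F hα))

section Aux

variable {C : Type u'} [Category.{v} C] {κ : Ordinal.{u}}

lemma mapEq (F : ↥(Set.Iic κ) ⥤ C) {a b : ↥(Set.Iic κ)} (g g' : a ⟶ b) :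
    F.map g = F.map g' := by
  congr 1
  exact Subsingleton.elim _ _

lemma map3 (F : ↥(Set.Iic κ) ⥤ C) {a b c : ↥(Set.Iic κ)} (g1 : a ⟶ b) (g2 : b ⟶ c)
    {W : C} (t : F.obj c ⟶ W) (g3 : a ⟶ c) :
    F.map g1 ≫ F.map g2 ≫ t = F.map g3 ≫ t := by
  rw [← Category.assoc, ← F.map_comp]
  rw [mapEq F (g1 ≫ g2) g3]

/-- A partial coherent family of lifts, defined on the ordinals `≤ β`. -/
structure Fam (F : ↥(Set.Iic κ) ⥤ C) {X Y : C} (f : X ⟶ Y) {k : Ordinal.{u}} (hk : k ≤ κ)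
    (u : F.obj ⟨0, Set.mem_Iic.mpr (zero_le ..)⟩ ⟶ X)
    (v : F.obj ⟨k, Set.mem_Iic.mpr hk⟩ ⟶ Y) where
  β : Ordinal.{u}
  hβ : β ≤ k
  l : ∀ (γ : Ordinal.{u}) (h : γ ≤ β), F.obj ⟨γ, Set.mem_Iic.mpr ((h.trans hβ).trans hk)⟩ ⟶ X
  hl0 : l 0 (zero_le ..) = u
  hcoh : ∀ (γ γ' : Ordinal.{u}) (h : γ ≤ γ') (h' : γ' ≤ β),
    F.map (homOfLE (Subtype.mk_le_mk.mpr h :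
        (⟨γ, Set.mem_Iic.mpr (((h.trans h').trans hβ).trans hk)⟩ : ↥(Set.Iic κ)) ≤
          ⟨γ', Set.mem_Iic.mpr ((h'.trans hβ).trans hk)⟩)) ≫ l γ' h' = l γ (h.trans h')
  hf : ∀ (γ : Ordinal.{u}) (h : γ ≤ β),
    l γ h ≫ f = F.map (homOfLE (Subtype.mk_le_mk.mpr ((h.trans hβ) : γ ≤ k) :
        (⟨γ, Set.mem_Iic.mpr ((h.trans hβ).trans hk)⟩ : ↥(Set.Iic κ)) ≤
          ⟨k, Set.mem_Iic.mpr hk⟩)) ≫ v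

variable (F : ↥(Set.Iic κ) ⥤ C) {X Y : C} (f : X ⟶ Y) {k : Ordinal.{u}} (hk : k ≤ κ)
    (u : F.obj ⟨0, Set.mem_Iic.mpr (zero_le ..)⟩ ⟶ X)
    (v : F.obj ⟨k, Set.mem_Iic.mpr hk⟩ ⟶ Y)

instance : Preorder (Fam F f hk u v) where
  le p q := ∃ h : p.β ≤ q.β, ∀ (γ : Ordinal.{u}) (hγ : γ ≤ p.β), q.l γ (hγ.trans h) = p.l γ hγ
  le_refl p := ⟨le_rfl, fun _ _ => rfl⟩
  le_trans p q r := fun ⟨h1, e1⟩ ⟨h2, e2⟩ =>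
    ⟨h1.trans h2, fun γ hγ => (e2 γ (hγ.trans h1)).trans (e1 γ hγ)⟩

/-- The trivial family defined only at `0`. -/
noncomputable def trivFam
    (hsq : u ≫ f = F.map (homOfLE (Subtype.mk_le_mk.mpr (zero_le ..))) ≫ v) :
    Fam F f hk u v where
  β := 0
  hβ := zero_le ..
  l γ h := F.map (homOfLE (Subtype.mk_le_mk.mpr h)) ≫ u
  hl0 := by
    show F.map (homOfLE _) ≫ u = u
    rw [mapEq F (homOfLE _) (𝟙 _), F.map_id, Category.id_comp]
  hcoh γ γ' h h' := map3 F _ _ u _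
  hf γ h := by
    rw [Category.assoc, hsq, map3 F _ _ v _]

end Aux

section Aux2

variable {C : Type u'} [Category.{v} C] {κ : Ordinal.{u}}
variable (F : ↥(Set.Iic κ) ⥤ C) {X Y : C} (f : X ⟶ Y) {k : Ordinal.{u}} (hk : k ≤ κ)
    (u : F.obj ⟨0, Set.mem_Iic.mpr (zero_le ..)⟩ ⟶ X)
    (v : F.obj ⟨k, Set.mem_Iic.mpr hk⟩ ⟶ Y)

lemma exists_gt (m : Fam F f hk u v) (hlt : m.β < k)
    (hstep : HasLiftingProperty
      (F.map (homOfLE (Subtype.mk_le_mk.mpr (Order.le_succ m.β) :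
        (⟨m.β, Set.mem_Iic.mpr (hlt.le.trans hk)⟩ : ↥(Set.Iic κ)) ≤
          ⟨Order.succ m.β, Set.mem_Iic.mpr ((Order.succ_le_of_lt hlt).trans hk)⟩))) f) :
    ∃ q : Fam F f hk u v, m ≤ q ∧ m.β < q.β := by
  have hsk : Order.succ m.β ≤ k := Order.succ_le_of_lt hlt
  have sq' : CommSq (m.l m.β le_rfl)
      (F.map (homOfLE (Subtype.mk_le_mk.mpr (Order.le_succ m.β) :
        (⟨m.β, Set.mem_Iic.mpr (hlt.le.trans hk)⟩ : ↥(Set.Iic κ)) ≤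
          ⟨Order.succ m.β, Set.mem_Iic.mpr ((Order.succ_le_of_lt hlt).trans hk)⟩))) f
      (F.map (homOfLE (Subtype.mk_le_mk.mpr hsk :
        (⟨Order.succ m.β, Set.mem_Iic.mpr (hsk.trans hk)⟩ : ↥(Set.Iic κ)) ≤
          ⟨k, Set.mem_Iic.mpr hk⟩)) ≫ v) := by
    constructor
    rw [m.hf m.β le_rfl]
    exact (map3 F _ _ v _).symm
  refine ⟨{
    β := Order.succ m.β
    hβ := hsk
    l := fun γ h => if h' : γ ≤ m.β then m.l γ h'
      else F.map (homOfLE (Subtype.mk_le_mk.mpr h)) ≫ sq'.lift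
    hl0 := by
      rw [dif_pos (show (0 : Ordinal.{u}) ≤ m.β from zero_le ..)]
      exact m.hl0
    hcoh := by
      intro γ γ' h h'
      by_cases h2 : γ' ≤ m.β
      · rw [dif_pos h2, dif_pos (h.trans h2)]
        exact m.hcoh γ γ' h h2
      · rw [dif_neg h2]
        by_cases h1 : γ ≤ m.β
        · rw [dif_pos h1,
            map3 F _ _ sq'.lift (homOfLE (Subtype.mk_le_mk.mpr ((h.trans h') : γ ≤ Order.succ m.β) :
              (⟨γ, Set.mem_Iic.mpr (((h.trans h').trans hsk).trans hk)⟩ : ↥(Set.Iic κ)) ≤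
                ⟨Order.succ m.β, Set.mem_Iic.mpr (hsk.trans hk)⟩)),
            ← map3 F (homOfLE (Subtype.mk_le_mk.mpr (h1 : γ ≤ m.β) :
              (⟨γ, Set.mem_Iic.mpr ((h1.trans m.hβ).trans hk)⟩ : ↥(Set.Iic κ)) ≤
                ⟨m.β, Set.mem_Iic.mpr (hlt.le.trans hk)⟩))
              (homOfLE (Subtype.mk_le_mk.mpr (Order.le_succ m.β))) sq'.lift _,
            sq'.fac_left]
          exact m.hcoh γ m.β h1 le_rfl
        · rw [dif_neg h1, map3 F _ _ sq'.lift (homOfLE (Subtype.mk_le_mk.mpr (h.trans h')))]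
    hf := by
      intro γ h
      by_cases h1 : γ ≤ m.β
      · rw [dif_pos h1]
        exact m.hf γ h1
      · rw [dif_neg h1, Category.assoc, sq'.fac_right, map3 F _ _ v _] },
    ⟨Order.le_succ m.β, fun γ hγ => dif_pos hγ⟩, Order.lt_succ m.β⟩

end Aux2

section Aux3

variable {C : Type u'} [Category.{v} C] {κ : Ordinal.{u}}
variable (F : ↥(Set.Iic κ) ⥤ C) {X Y : C} (f : X ⟶ Y) {k : Ordinal.{u}} (hk : k ≤ κ)
    (u : F.obj ⟨0, Set.mem_Iic.mpr (zero_le ..)⟩ ⟶ X)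
    (v : F.obj ⟨k, Set.mem_Iic.mpr hk⟩ ⟶ Y)

lemma chainBound (hF : IsSequential F) (c : Set (Fam F f hk u v))
    (hc : IsChain (· ≤ ·) c) (hne : c.Nonempty) : BddAbove c := by
  classical
  set S : Set Ordinal.{u} := Fam.β '' c with hS
  have hSne : S.Nonempty := hne.image _
  have hSbdd : BddAbove S := by
    refine ⟨k, ?_⟩
    rintro x ⟨p, hp, rfl⟩
    exact p.hβ
  set B : Ordinal.{u} := sSup S with hB
  have hBk : B ≤ k := csSup_le hSne (by rintro x ⟨p, hp, rfl⟩; exact p.hβ)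
  by_cases hatt : ∃ p ∈ c, B ≤ p.β
  · obtain ⟨p, hp, hple⟩ := hatt
    refine ⟨p, fun q hq => ?_⟩
    rcases hc.total hq hp with h | h
    · exact h
    · obtain ⟨hpq, e⟩ := h
      have hqp : q.β ≤ p.β := le_trans (le_csSup hSbdd ⟨q, hq, rfl⟩) hple
      exact ⟨hqp, fun γ hγ => (e γ (hγ.trans hqp)).symm⟩
  · push_neg at hatt
    have hpick : ∀ γ : Ordinal.{u}, γ < B → ∃ p, p ∈ c ∧ γ ≤ p.β := by
      intro γ hγ
      obtain ⟨x, hx, hγx⟩ := exists_lt_of_lt_csSup hSne hγ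
      obtain ⟨p, hp, rfl⟩ := hx
      exact ⟨p, hp, hγx.le⟩
    choose pick hmem hle using hpick
    have hBκ : B ≤ κ := hBk.trans hk
    -- the partial lifts glued along the chain
    set g : ∀ (γ : Ordinal.{u}) (h : γ < B), F.obj ⟨γ, Set.mem_Iic.mpr ((h.le.trans hBk).trans hk)⟩ ⟶ X :=
      fun γ h => (pick γ h).l γ (hle γ h) with hg
    have hgcoh : ∀ (γ γ' : Ordinal.{u}) (h : γ ≤ γ') (h' : γ' < B),
        F.map (homOfLE (Subtype.mk_le_mk.mpr h :
          (⟨γ, Set.mem_Iic.mpr (((h.trans h'.le).trans hBk).trans hk)⟩ : ↥(Set.Iic κ)) ≤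
            ⟨γ', Set.mem_Iic.mpr ((h'.le.trans hBk).trans hk)⟩)) ≫ g γ' h' =
          g γ (lt_of_le_of_lt h h') := by
      intro γ γ' h h'
      rcases hc.total (hmem γ (lt_of_le_of_lt h h')) (hmem γ' h') with ⟨hb, e⟩ | ⟨hb, e⟩
      · exact ((pick γ' h').hcoh γ γ' h (hle γ' h')).trans (e γ (hle γ (lt_of_le_of_lt h h')))
      · refine Eq.trans ?_ ((pick γ (lt_of_le_of_lt h h')).hcoh γ γ' h ((hle γ' h').trans hb))
        show F.map _ ≫ g γ' h' = F.map _ ≫ (pick γ (lt_of_le_of_lt h h')).l γ' ((hle γ' h').trans hb)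
        rw [show g γ' h' = (pick γ (lt_of_le_of_lt h h')).l γ' ((hle γ' h').trans hb) from
          (e γ' (hle γ' h')).symm]
    have hgf : ∀ (γ : Ordinal.{u}) (h : γ < B),
        g γ h ≫ f = F.map (homOfLE (Subtype.mk_le_mk.mpr ((h.le.trans hBk) : γ ≤ k) :
          (⟨γ, Set.mem_Iic.mpr ((h.le.trans hBk).trans hk)⟩ : ↥(Set.Iic κ)) ≤
            ⟨k, Set.mem_Iic.mpr hk⟩)) ≫ v :=
      fun γ h => (pick γ h).hf γ (hle γ h)
    have hlim : Order.IsSuccLimit B := by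
      rw [Ordinal.isSuccLimit_iff]
      constructor
      · intro h0
        obtain ⟨p, hp⟩ := hne
        exact absurd (h0 ▸ hatt p hp) (not_lt_of_ge (show (0 : Ordinal.{u}) ≤ p.β from zero_le ..))
      · refine Order.isSuccPrelimit_of_succ_lt (fun a ha => ?_)
        obtain ⟨x, hx, hax⟩ := exists_lt_of_lt_csSup hSne ha
        obtain ⟨p, hp, rfl⟩ := hx
        exact lt_of_le_of_lt (Order.succ_le_of_lt hax) (hatt p hp)
    obtain ⟨ic⟩ := hF B hBκ hlim
    set coc : Cocone (iicIncl hBκ ⋙ F) :=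
      { pt := X
        ι :=
          { app := fun γ => g γ.1 γ.2
            naturality := fun γ γ' gg => by
              dsimp
              exact (hgcoh γ.1 γ'.1 (leOfHom gg) γ'.2).trans (Category.comp_id _).symm } } with hcoc
    set w : F.obj ⟨B, Set.mem_Iic.mpr hBκ⟩ ⟶ X := ic.desc coc with hw
    have hfac : ∀ (γ : Ordinal.{u}) (hγ : γ < B),
        F.map (homOfLE (Subtype.mk_le_mk.mpr hγ.le :
          (⟨γ, Set.mem_Iic.mpr ((hγ.le.trans hBk).trans hk)⟩ : ↥(Set.Iic κ)) ≤
            ⟨B, Set.mem_Iic.mpr hBκ⟩)) ≫ w = g γ hγ := fun γ hγ => ic.fac coc ⟨γ, hγ⟩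
    have hwf : w ≫ f = F.map (homOfLE (Subtype.mk_le_mk.mpr hBk :
        (⟨B, Set.mem_Iic.mpr hBκ⟩ : ↥(Set.Iic κ)) ≤ ⟨k, Set.mem_Iic.mpr hk⟩)) ≫ v := by
      refine ic.hom_ext (fun γ => ?_)
      have h1 := hfac γ.1 γ.2
      show F.map (homOfLE (Subtype.mk_le_mk.mpr γ.2.le :
          (⟨γ.1, Set.mem_Iic.mpr ((γ.2.le.trans hBk).trans hk)⟩ : ↥(Set.Iic κ)) ≤
            ⟨B, Set.mem_Iic.mpr hBκ⟩)) ≫ w ≫ f =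
        F.map (homOfLE (Subtype.mk_le_mk.mpr γ.2.le :
          (⟨γ.1, Set.mem_Iic.mpr ((γ.2.le.trans hBk).trans hk)⟩ : ↥(Set.Iic κ)) ≤
            ⟨B, Set.mem_Iic.mpr hBκ⟩)) ≫ F.map (homOfLE (Subtype.mk_le_mk.mpr hBk :
          (⟨B, Set.mem_Iic.mpr hBκ⟩ : ↥(Set.Iic κ)) ≤ ⟨k, Set.mem_Iic.mpr hk⟩)) ≫ v
      rw [map3 F _ _ v (homOfLE (Subtype.mk_le_mk.mpr ((γ.2.le.trans hBk) : γ.1 ≤ k))),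
        ← Category.assoc]
      rw [show F.map (homOfLE _) ≫ w = g γ.1 γ.2 from hfac γ.1 γ.2]
      exact hgf γ.1 γ.2
    refine ⟨{
      β := B
      hβ := hBk
      l := fun γ h => if h' : γ < B then g γ h'
        else F.map (homOfLE (Subtype.mk_le_mk.mpr h)) ≫ w
      hl0 := by
        rw [dif_pos hlim.pos]
        exact (pick 0 hlim.pos).hl0
      hcoh := by
        intro γ γ' h h'
        by_cases h2 : γ' < B
        · rw [dif_pos h2, dif_pos (lt_of_le_of_lt h h2)]
          exact hgcoh γ γ' h h2
        · rw [dif_neg h2]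
          by_cases h1 : γ < B
          · rw [dif_pos h1, map3 F _ _ w (homOfLE (Subtype.mk_le_mk.mpr (h1.le :  γ ≤ B) :
              (⟨γ, Set.mem_Iic.mpr ((h1.le.trans hBk).trans hk)⟩ : ↥(Set.Iic κ)) ≤
                ⟨B, Set.mem_Iic.mpr hBκ⟩))]
            exact hfac γ h1
          · rw [dif_neg h1, map3 F _ _ w (homOfLE (Subtype.mk_le_mk.mpr (h.trans h')))]
      hf := by
        intro γ h
        by_cases h1 : γ < B
        · rw [dif_pos h1]
          exact hgf γ h1
        · rw [dif_neg h1, Category.assoc, hwf, map3 F _ _ v _] }, ?_⟩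
    intro p hp
    refine ⟨le_csSup hSbdd ⟨p, hp, rfl⟩, fun γ hγ => ?_⟩
    have h1 : γ < B := lt_of_le_of_lt hγ (hatt p hp)
    show (if h' : γ < B then g γ h' else _) = p.l γ hγ
    rw [dif_pos h1]
    rcases hc.total (hmem γ h1) hp with ⟨hb, e⟩ | ⟨hb, e⟩
    · exact (e γ (hle γ h1)).symm
    · exact e γ hγ

end Aux3

theorem rlp_of_rlp_succ_steps {C : Type u'} [Category.{v} C] (κ : Ordinal.{u})
    (F : ↥(Set.Iic κ) ⥤ C) (hF : IsSequential F) {X Y : C} (f : X ⟶ Y)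
    (hstep : ∀ (k : Ordinal.{u}) (hk : k < κ),
      HasLiftingProperty
        (F.map (homOfLE
          (Subtype.mk_le_mk.mpr (Order.le_succ k) :
            (⟨k, Set.mem_Iic.mpr hk.le⟩ : ↥(Set.Iic κ)) ≤
              ⟨Order.succ k, Set.mem_Iic.mpr (Order.succ_le_of_lt hk)⟩))) f) :
    ∀ (k : Ordinal.{u}) (hk : k ≤ κ),
      HasLiftingProperty
        (F.map (homOfLE
          (Subtype.mk_le_mk.mpr (zero_le ..) :
            (⟨0, Set.mem_Iic.mpr (zero_le ..)⟩ : ↥(Set.Iic κ)) ≤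
              ⟨k, Set.mem_Iic.mpr hk⟩))) f := by
  intro k hk
  constructor
  intro u v sq
  classical
  haveI : Nonempty (Fam F f hk u v) := ⟨trivFam F f hk u v sq.w⟩
  obtain ⟨m, hm⟩ := zorn_le_nonempty (fun c hc hcne => chainBound F f hk u v hF c hc hcne)
  have hmk : m.β = k := by
    by_contra hne'
    have hlt : m.β < k := lt_of_le_of_ne m.hβ hne'
    obtain ⟨q, hq1, hq2⟩ := exists_gt F f hk u v m hlt (hstep m.β (hlt.trans_le hk))
    exact absurd (hm hq1).1 (not_le.mpr hq2)
  have hkm : k ≤ m.β := le_of_eq hmk.symm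
  refine CommSq.HasLift.mk' ⟨m.l k hkm, ?_, ?_⟩
  · exact (m.hcoh 0 k (zero_le ..) hkm).trans m.hl0
  · rw [m.hf k hkm, mapEq F (homOfLE _) (𝟙 _), F.map_id, Category.id_comp]
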